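/- arXiv:1907.00861 — 7 statements merged into one kernel-verified Lean document; each statement's English description precedes it below -/
import Mathlib

section
/- If C is the binary code of a (6,4) net, then the dimension of C over F₂ is at most 20. -/
/-- A `(6,4)` net on a point type `P`: 36 points, lines of size 6 indexed by
4 parallel classes of 6 lines each; each parallel class partitions the point set,
and two lines from different parallel classes meet in exactly one point. -/
structure Net64 (P : Type) [Fintype P] [DecidableEq P] where
  line : Fin 4 → Fin 6 → Finset P
  card_points : Fintype.card P = 36
  line_card : ∀ i j, (line i j).card = 6
  partition : ∀ (i : Fin 4) (p : P), ∃! j : Fin 6, p ∈ line i j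
  meet : ∀ (i i' : Fin 4) (j j' : Fin 6), i ≠ i' → (line i j ∩ line i' j').card = 1

/-- The characteristic function `v^s` of a finite set `s`, with values in `F₂`. -/
def chi {P : Type} [DecidableEq P] (s : Finset P) : P → ZMod 2 :=
  fun p => if p ∈ s then 1 else 0

/-- The binary code of a net: the `F₂`-span of the characteristic functions of its lines. -/
def Net64.code {P : Type} [Fintype P] [DecidableEq P] (N : Net64 P) :
    Submodule (ZMod 2) (P → ZMod 2) :=
  Submodule.span (ZMod 2) (Set.range fun x : Fin 4 × Fin 6 => chi (N.line x.1 x.2))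

section Aux
open Matrix

variable {P : Type} [Fintype P] [DecidableEq P]

/-- The incidence matrix: rows are characteristic vectors of lines. -/
def Net64.mat (N : Net64 P) : Matrix (Fin 4 × Fin 6) P (ZMod 2) :=
  fun x p => chi (N.line x.1 x.2) p

lemma Net64.gram (N : Net64 P) :
    N.mat * (N.mat)ᵀ = Matrix.of fun x y => if x.1 = y.1 then 0 else 1 := by
  ext x y
  have hsum : (N.mat * (N.mat)ᵀ) x y
      = ((N.line x.1 x.2 ∩ N.line y.1 y.2).card : ZMod 2) := by
    rw [Matrix.mul_apply]
    simp only [Net64.mat, Matrix.transpose_apply, chi, ite_mul, one_mul, zero_mul]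
    rw [Finset.sum_ite_mem, Finset.univ_inter, Finset.sum_boole,
      Finset.filter_mem_eq_inter]
  rw [hsum]
  obtain ⟨i, j⟩ := x
  obtain ⟨i', j'⟩ := y
  simp only [Matrix.of_apply]
  by_cases h1 : i = i'
  · subst h1
    by_cases h2 : j = j'
    · subst h2
      rw [if_pos rfl, Finset.inter_self, N.line_card]
      decide
    · have hdisj : N.line i j ∩ N.line i j' = ∅ := by
        rw [Finset.eq_empty_iff_forall_notMem]
        intro p hp
        rw [Finset.mem_inter] at hp
        obtain ⟨j₀, _, huniq⟩ := N.partition i p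
        exact h2 ((huniq j hp.1).trans (huniq j' hp.2).symm)
      rw [if_pos rfl, hdisj]
      simp
  · rw [N.meet i i' j j' h1, if_neg h1]
    simp



/-- The Gram matrix factors through `Fin 4`, hence has rank at most `4`. -/
lemma Net64.gram_rank_le (N : Net64 P) : (N.mat * (N.mat)ᵀ).rank ≤ 4 := by
  rw [N.gram]
  have hfac : (Matrix.of fun x y : Fin 4 × Fin 6 => if x.1 = y.1 then (0 : ZMod 2) else 1)
      = (Matrix.of fun (x : Fin 4 × Fin 6) (i : Fin 4) => if x.1 = i then (1 : ZMod 2) else 0) *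
        (Matrix.of fun (i : Fin 4) (y : Fin 4 × Fin 6) => if i = y.1 then (0 : ZMod 2) else 1) := by
    ext x y
    rw [Matrix.mul_apply]
    simp only [Matrix.of_apply, ite_mul, one_mul, zero_mul]
    rw [Finset.sum_ite_eq]
    simp
  rw [hfac]
  refine le_trans (le_trans (Matrix.rank_mul_le_left _ _) (Matrix.rank_le_card_width _)) ?_
  simp

/-- The binary code of a `(6,4)` net has dimension at most 20 over `F₂`. -/
theorem net64_code_finrank_le_20 {P : Type} [Fintype P] [DecidableEq P] (N : Net64 P) :
    Module.finrank (ZMod 2) N.code ≤ 20 := by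
  classical
  set A := N.mat with hA
  have hC : N.code = LinearMap.range ((A)ᵀ.mulVecLin) := by
    rw [Matrix.range_mulVecLin]
    rfl
  have hrank : Module.finrank (ZMod 2) N.code = A.rank := by
    rw [hC, ← Matrix.rank_transpose A, Matrix.rank]
  set T : (P → ZMod 2) →ₗ[ZMod 2] ((Fin 4 × Fin 6) → ZMod 2) := A.mulVecLin with hT
  set T' : N.code →ₗ[ZMod 2] ((Fin 4 × Fin 6) → ZMod 2) := T.comp N.code.subtype with hT'
  -- rank-nullity for T'
  have hrn : Module.finrank (ZMod 2) (LinearMap.range T')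
      + Module.finrank (ZMod 2) (LinearMap.ker T')
      = Module.finrank (ZMod 2) N.code := T'.finrank_range_add_finrank_ker
  -- range T' is inside range of (A * Aᵀ).mulVecLin
  have hrange : LinearMap.range T' ≤ LinearMap.range ((A * (A)ᵀ).mulVecLin) := by
    rintro w ⟨⟨f, hf⟩, rfl⟩
    rw [hC] at hf
    obtain ⟨c, rfl⟩ := hf
    exact ⟨c, by simp [hT', hT, Matrix.mulVecLin_mul]⟩
  have h4 : Module.finrank (ZMod 2) (LinearMap.range T') ≤ 4 :=
    le_trans (Submodule.finrank_mono hrange) (N.gram_rank_le)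
  -- kernel of T' embeds into kernel of T
  have hkermap : (LinearMap.ker T').map N.code.subtype ≤ LinearMap.ker T := by
    rintro x ⟨y, hy, rfl⟩
    exact hy
  have hker : Module.finrank (ZMod 2) (LinearMap.ker T')
      ≤ Module.finrank (ZMod 2) (LinearMap.ker T) := by
    rw [← Submodule.finrank_map_subtype_eq]
    exact Submodule.finrank_mono hkermap
  -- rank-nullity for T
  have hrnT : A.rank + Module.finrank (ZMod 2) (LinearMap.ker T) = 36 := by
    have := T.finrank_range_add_finrank_ker
    rwa [Module.finrank_fintype_fun_eq_card, N.card_points] at this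
  omega

end Aux
end

section
/- Let C be the binary code of a (6,4) net with parallel classes Π₁, Π₂, Π₃, Π₄, and let H = C ∩ C^⊥ be its hull. For any choice of lines λ₁ ∈ Π₁, λ₂ ∈ Π₂, λ₃ ∈ Π₃, λ₄ ∈ Π₄, the characteristic functions v^{λ₁}, v^{λ₂}, v^{λ₃}, v^{λ₄} are linearly independent over F₂ (so their span has dimension 4), and C is the sum of this span and H, i.e., C = span{v^{λ₁},…,v^{λ₄}} + H. -/
/-- The orthogonal complement of a subspace of `F₂^P` with respect to the standard
dot product `f · g = ∑ p, f p * g p`. -/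
def dualCode {P : Type} [Fintype P] (C : Submodule (ZMod 2) (P → ZMod 2)) :
    Submodule (ZMod 2) (P → ZMod 2) where
  carrier := {f | ∀ g ∈ C, ∑ p, f p * g p = 0}
  add_mem' := by
    intro a b ha hb g hg
    have h1 := ha g hg
    have h2 := hb g hg
    simp only [Set.mem_setOf_eq, Pi.add_apply, add_mul] at *
    rw [Finset.sum_add_distrib, h1, h2, add_zero]
  zero_mem' := by
    intro g hg
    simp
  smul_mem' := by
    intro c f hf g hg
    have h1 := hf g hg
    simp only [Set.mem_setOf_eq, Pi.smul_apply, smul_eq_mul, mul_assoc] at *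
    rw [← Finset.mul_sum, h1, mul_zero]


section Aux
variable {P : Type} [Fintype P] [DecidableEq P]

lemma dot_chi (s t : Finset P) :
    ∑ p, chi s p * chi t p = ((s ∩ t).card : ZMod 2) := by
  have h : ∀ p : P, chi s p * chi t p = if p ∈ s ∩ t then (1 : ZMod 2) else 0 := by
    intro p
    simp only [chi, Finset.mem_inter]
    by_cases hs : p ∈ s <;> by_cases ht : p ∈ t <;> simp [hs, ht]
  rw [Finset.sum_congr rfl fun p _ => h p, Finset.sum_ite_mem, Finset.univ_inter,
    Finset.sum_const, nsmul_eq_mul, mul_one]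

def dotMap (w : P → ZMod 2) : (P → ZMod 2) →ₗ[ZMod 2] ZMod 2 where
  toFun g := ∑ p, w p * g p
  map_add' a b := by simp [mul_add, Finset.sum_add_distrib]
  map_smul' c g := by simp [Finset.mul_sum, mul_left_comm]

omit [DecidableEq P] in
@[simp] lemma dotMap_apply (w g : P → ZMod 2) : dotMap w g = ∑ p, w p * g p := rfl

lemma inter_same_class (N : Net64 P) (i : Fin 4) {a b : Fin 6} (h : a ≠ b) :
    N.line i a ∩ N.line i b = ∅ := by
  rw [Finset.eq_empty_iff_forall_notMem]
  intro p hp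
  rw [Finset.mem_inter] at hp
  obtain ⟨j₀, _, huniq⟩ := N.partition i p
  exact h ((huniq a hp.1).trans (huniq b hp.2).symm)

lemma dot_lines (N : Net64 P) (i i' : Fin 4) (a b : Fin 6) :
    ∑ p, chi (N.line i a) p * chi (N.line i' b) p
      = if i = i' then 0 else 1 := by
  rw [dot_chi]
  by_cases h : i = i'
  · subst h
    by_cases hj : a = b
    · subst hj
      rw [Finset.inter_self, N.line_card]
      simp; decide
    · simp [inter_same_class N i hj]
  · simp [h, N.meet i i' a b h]

end Aux

/-- For any choice of one line `λᵢ` from each parallel class `Πᵢ` of a `(6,4)` net,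
the characteristic functions `v^{λ₁}, …, v^{λ₄}` are linearly independent over `F₂`
(so their span has dimension 4), and the code `C` is the sum of their span and the
hull `H = C ⊓ C^⊥`. -/
theorem net64_code_eq_span_sup_hull {P : Type} [Fintype P] [DecidableEq P] (N : Net64 P)
    (j : Fin 4 → Fin 6) :
    LinearIndependent (ZMod 2) (fun i : Fin 4 => chi (N.line i (j i))) ∧
    Module.finrank (ZMod 2)
      (Submodule.span (ZMod 2) (Set.range fun i : Fin 4 => chi (N.line i (j i)))) = 4 ∧
    N.code = Submodule.span (ZMod 2) (Set.range fun i : Fin 4 => chi (N.line i (j i)))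
      ⊔ (N.code ⊓ dualCode N.code) := by
  classical
  set v : Fin 4 → (P → ZMod 2) := fun i => chi (N.line i (j i)) with hv
  -- Linear independence
  have lin : LinearIndependent (ZMod 2) v := by
    rw [Fintype.linearIndependent_iff]
    intro g hg
    have key : ∀ i' : Fin 4, g i' = ∑ i, g i := by
      intro i'
      have h0 := congrArg (dotMap (v i')) hg
      rw [map_sum, map_zero] at h0
      simp only [map_smul, smul_eq_mul, dotMap_apply, hv] at h0
      have h1 : ∀ i : Fin 4,
          g i * (∑ p, chi (N.line i' (j i')) p * chi (N.line i (j i)) p)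
            = g i + g i * (if i' = i then 1 else 0) := by
        intro i
        rw [dot_lines N i' i (j i') (j i)]
        split_ifs with h
        · simp [CharTwo.add_self_eq_zero]
        · simp
      rw [Finset.sum_congr rfl fun i _ => h1 i, Finset.sum_add_distrib] at h0
      have h2 : ∑ i : Fin 4, g i * (if i' = i then (1 : ZMod 2) else 0) = g i' := by
        simp [mul_ite]
      rw [h2] at h0
      have := add_eq_zero_iff_eq_neg.mp h0
      rw [this]; ring_nf; exact (CharTwo.neg_eq _).symm
    intro i
    have hs : (∑ i, g i) = 0 := by
      have : (∑ i : Fin 4, g i) = ∑ _i : Fin 4, (∑ i : Fin 4, g i) :=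
        Finset.sum_congr rfl fun i _ => key i
      rw [Finset.sum_const, Finset.card_univ, Fintype.card_fin] at this
      have h4 : (4 : ℕ) • (∑ i : Fin 4, g i) = 0 := by
        rw [nsmul_eq_mul]
        have : ((4 : ℕ) : ZMod 2) = 0 := by decide
        rw [this, zero_mul]
      rw [h4] at this; exact this
    rw [key i, hs]
  refine ⟨lin, ?_, ?_⟩
  · rw [finrank_span_eq_card lin, Fintype.card_fin]
  · apply le_antisymm
    · rw [Net64.code]
      apply Submodule.span_le.mpr
      rintro _ ⟨⟨i, b⟩, rfl⟩
      -- chi (line i b) = v i + w, with w in the hull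
      set w : P → ZMod 2 := chi (N.line i b) + v i with hw
      have hdecomp : chi (N.line i b) = v i + w := by
        funext p
        have : ∀ a c : ZMod 2, a = c + (a + c) := by decide
        exact this _ _
      have hwcode : w ∈ N.code := by
        apply add_mem
        · exact Submodule.subset_span ⟨(i, b), rfl⟩
        · exact Submodule.subset_span ⟨(i, j i), rfl⟩
      have hwdual : w ∈ dualCode N.code := by
        have hker : N.code ≤ LinearMap.ker (dotMap w) := by
          rw [Net64.code]
          apply Submodule.span_le.mpr
          rintro _ ⟨⟨i', b'⟩, rfl⟩
          rw [SetLike.mem_coe, LinearMap.mem_ker, dotMap_apply]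
          have : ∀ p : P, w p * chi (N.line i' b') p
              = chi (N.line i b) p * chi (N.line i' b') p
                + chi (N.line i (j i)) p * chi (N.line i' b') p := by
            intro p; rw [hw]; simp [hv, add_mul]
          rw [Finset.sum_congr rfl fun p _ => this p, Finset.sum_add_distrib,
            dot_lines, dot_lines]
          exact CharTwo.add_self_eq_zero _
        intro g hg
        exact hker hg
      show chi (N.line i b) ∈ _
      rw [hdecomp]
      exact add_mem
        (Submodule.mem_sup_left (Submodule.subset_span ⟨i, rfl⟩))
        (Submodule.mem_sup_right ⟨hwcode, hwdual⟩)
    · apply sup_le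
      · apply Submodule.span_le.mpr
        rintro _ ⟨i, rfl⟩
        exact Submodule.subset_span ⟨(i, j i), rfl⟩
      · exact inf_le_left
end

section
/- If C is the binary code of a (6,4) net and H = C ∩ C^⊥ is its hull, then dim H = dim C − 4. -/
namespace Net64Aux

variable {P : Type} [Fintype P] [DecidableEq P]

lemma chi_dot (s t : Finset P) :
    ∑ p, chi s p * chi t p = ((s ∩ t).card : ZMod 2) := by
  have h : ∀ p : P, chi s p * chi t p = if p ∈ s ∩ t then (1 : ZMod 2) else 0 := by
    intro p
    simp only [chi, Finset.mem_inter]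
    split_ifs <;> simp_all
  simp only [h]
  rw [Finset.sum_ite_mem, Finset.univ_inter, Finset.sum_const, nsmul_eq_mul, mul_one]

/-- dot product as a linear map in the second argument. -/
def dotL (f : P → ZMod 2) : (P → ZMod 2) →ₗ[ZMod 2] ZMod 2 where
  toFun g := ∑ p, f p * g p
  map_add' a b := by simp [mul_add, Finset.sum_add_distrib]
  map_smul' c a := by simp [Finset.mul_sum, mul_left_comm]

/-- the Gram map. -/
def Phi (N : Net64 P) : (P → ZMod 2) →ₗ[ZMod 2] (Fin 4 × Fin 6 → ZMod 2) where
  toFun f := fun x => ∑ p, f p * chi (N.line x.1 x.2) p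
  map_add' a b := by funext x; simp [add_mul, Finset.sum_add_distrib]
  map_smul' c a := by funext x; simp [Finset.mul_sum, mul_assoc]

lemma dual_eq_ker (N : Net64 P) : dualCode N.code = LinearMap.ker (Phi N) := by
  ext f
  constructor
  · intro hf
    simp only [LinearMap.mem_ker]
    funext x
    exact hf _ (Submodule.subset_span ⟨x, rfl⟩)
  · intro hf g hg
    have hle : N.code ≤ LinearMap.ker (dotL f) := by
      rw [Net64.code, Submodule.span_le]
      rintro _ ⟨x, rfl⟩
      simpa [dotL, Phi] using congrFun hf x
    exact hle hg

lemma line_disjoint (N : Net64 P) (i : Fin 4) {j j' : Fin 6} (h : j ≠ j') :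
    N.line i j ∩ N.line i j' = ∅ := by
  rw [Finset.eq_empty_iff_forall_notMem]
  intro p hp
  rw [Finset.mem_inter] at hp
  obtain ⟨j₀, _, hu⟩ := N.partition i p
  exact h ((hu j hp.1).trans (hu j' hp.2).symm)

/-- the four row vectors of the Gram matrix -/
def g (i : Fin 4) : Fin 4 × Fin 6 → ZMod 2 := fun x => if x.1 = i then 0 else 1

lemma Phi_chi (N : Net64 P) (x : Fin 4 × Fin 6) :
    Phi N (chi (N.line x.1 x.2)) = g x.1 := by
  funext y
  show ∑ p, chi (N.line x.1 x.2) p * chi (N.line y.1 y.2) p = _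
  rw [chi_dot]
  unfold g
  by_cases h : y.1 = x.1
  · rw [if_pos h, h]
    by_cases h2 : x.2 = y.2
    · rw [h2, Finset.inter_self, N.line_card]
      decide
    · rw [line_disjoint N _ h2]
      simp
  · rw [if_neg h, Finset.inter_comm, N.meet _ _ _ _ h, Nat.cast_one]

lemma g_li : LinearIndependent (ZMod 2) (g : Fin 4 → Fin 4 × Fin 6 → ZMod 2) := by
  rw [Fintype.linearIndependent_iff]
  intro c h i
  have key : ∀ i' : Fin 4, ∑ x, c x = c i' := by
    intro i'
    have h' := congrFun h (i', 0)
    simp only [Finset.sum_apply, Pi.smul_apply, g, smul_eq_mul, Pi.zero_apply] at h'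
    have e0 : ∑ x : Fin 4, c x * (if i' = x then 0 else 1)
        = ∑ x ∈ Finset.univ.erase i', c x := by
      rw [← Finset.sum_erase_add Finset.univ _ (Finset.mem_univ i'), if_pos rfl,
        mul_zero, add_zero]
      exact Finset.sum_congr rfl fun x hx => by
        rw [Finset.mem_erase] at hx
        rw [if_neg (Ne.symm hx.1), mul_one]
    rw [e0] at h'
    rw [← Finset.sum_erase_add Finset.univ _ (Finset.mem_univ i'), h', zero_add]
  have s0 : ∑ x, c x = 0 := by
    have h1 : ∑ x : Fin 4, c x = ∑ _x : Fin 4, ∑ x, c x :=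
      Finset.sum_congr rfl fun x _ => (key x).symm
    rw [Finset.sum_const, Finset.card_univ, Fintype.card_fin] at h1
    have h4 : ((4 : ℕ) : ZMod 2) = 0 := by decide
    rw [nsmul_eq_mul, h4, zero_mul] at h1
    exact h1
  rw [← key i, s0]

lemma map_code (N : Net64 P) :
    Submodule.map (Phi N) N.code = Submodule.span (ZMod 2) (Set.range g) := by
  rw [Net64.code, Submodule.map_span]
  congr 1
  rw [← Set.range_comp]
  ext v
  constructor
  · rintro ⟨x, rfl⟩
    exact ⟨x.1, (Phi_chi N x).symm⟩
  · rintro ⟨i, rfl⟩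
    exact ⟨(i, 0), Phi_chi N (i, 0)⟩

end Net64Aux

open Net64Aux in

/-- For the binary code `C` of a `(6,4)` net and its hull `H = C ⊓ C^⊥`,
`dim H = dim C − 4`. -/
theorem net64_hull_finrank {P : Type} [Fintype P] [DecidableEq P] (N : Net64 P) :
    Module.finrank (ZMod 2) (N.code ⊓ dualCode N.code : Submodule (ZMod 2) (P → ZMod 2))
      = Module.finrank (ZMod 2) N.code - 4 := by
  classical
  have hrn := LinearMap.finrank_range_add_finrank_ker ((Phi N).domRestrict N.code)
  rw [LinearMap.range_domRestrict, LinearMap.ker_domRestrict] at hrn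
  have hmap : Module.finrank (ZMod 2) (Submodule.map (Phi N) N.code) = 4 := by
    rw [map_code N, finrank_span_eq_card g_li, Fintype.card_fin]
  have hker : Module.finrank (ZMod 2)
      (Submodule.comap N.code.subtype (LinearMap.ker (Phi N)))
      = Module.finrank (ZMod 2)
        (N.code ⊓ dualCode N.code : Submodule (ZMod 2) (P → ZMod 2)) := by
    rw [dual_eq_ker]
    have h1 : Submodule.comap N.code.subtype (LinearMap.ker (Phi N))
        = Submodule.comap N.code.subtype (N.code ⊓ LinearMap.ker (Phi N)) := by
      rw [Submodule.comap_inf]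
      simp
    rw [h1]
    exact (Submodule.comapSubtypeEquivOfLe inf_le_left).finrank_eq
  rw [hmap, hker] at hrn
  omega
end

section
/- In a (6,4) net, if M is a set of lines with parallax (2,2,4,0) (up to permutation of the parallel classes), then c(M) ≠ 0; indeed wt(c(M)) = 4p₃ + 8p₄ + 8 ≥ 8, where p₃ and p₄ are the numbers of 3-points and 4-points of M. -/
/-- `c(Λ)`: the `F₂`-sum of the characteristic functions of a set of lines of the net,
a set of lines being given by the finite set of its (class, index) pairs. -/
def Net64.cSum {P : Type} [Fintype P] [DecidableEq P] (N : Net64 P)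
    (Λ : Finset (Fin 4 × Fin 6)) : P → ZMod 2 :=
  ∑ x ∈ Λ, chi (N.line x.1 x.2)

/-- `lᵢ = |Λ ∩ Πᵢ|`: the number of lines of `Λ` in the `i`-th parallel class. -/
def lcount (Λ : Finset (Fin 4 × Fin 6)) (i : Fin 4) : ℕ :=
  (Λ.filter fun x => x.1 = i).card

/-- `pⱼ`: the number of points of the net lying on exactly `j` lines of `Λ`. -/
def Net64.pcount {P : Type} [Fintype P] [DecidableEq P] (N : Net64 P)
    (Λ : Finset (Fin 4 × Fin 6)) (j : ℕ) : ℕ :=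
  (Finset.univ.filter fun p : P => (Λ.filter fun x => p ∈ N.line x.1 x.2).card = j).card

/-- The Hamming weight of `f ∈ F₂^P`: the number of points where `f` is nonzero. -/
def wt {P : Type} [Fintype P] (f : P → ZMod 2) : ℕ :=
  (Finset.univ.filter fun p => f p ≠ 0).card

/-- If `M` is a set of lines of a `(6,4)` net with parallax `(2,2,4,0)` up to permutation
of the parallel classes, then `c(M) ≠ 0`; indeed
`wt(c(M)) = 4p₃ + 8p₄ + 8 ≥ 8`. -/
theorem net64_parallax_2240 {P : Type} [Fintype P] [DecidableEq P] (N : Net64 P)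
    (M : Finset (Fin 4 × Fin 6)) (σ : Equiv.Perm (Fin 4))
    (h : (lcount M (σ 0), lcount M (σ 1), lcount M (σ 2), lcount M (σ 3)) = (2, 2, 4, 0)) :
    N.cSum M ≠ 0 ∧
    wt (N.cSum M) = 4 * N.pcount M 3 + 8 * N.pcount M 4 + 8 ∧
    8 ≤ wt (N.cSum M) := by
  obtain ⟨hl0, hl1, hl2, hl3⟩ :
      lcount M (σ 0) = 2 ∧ lcount M (σ 1) = 2 ∧ lcount M (σ 2) = 4 ∧ lcount M (σ 3) = 0 := by
    simpa [Prod.ext_iff] using h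
  set f : P → ℕ := fun p => (M.filter fun x => p ∈ N.line x.1 x.2).card with hf
  -- sums of lcount over classes
  have hsumL : ∀ g : ℕ → ℕ, ∑ i : Fin 4, g (lcount M i) = g 2 + g 2 + g 4 + g 0 := by
    intro g
    have := (Equiv.sum_comp σ fun i => g (lcount M i)).symm
    rw [this, Fin.sum_univ_four, hl0, hl1, hl2, hl3]
  -- |M| = 8
  have hMcard : M.card = 8 := by
    have h1' : M.card = ∑ i : Fin 4, lcount M i :=
      Finset.card_eq_sum_card_fiberwise (fun x _ => Finset.mem_univ x.1)
    have := hsumL id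
    simp only [id] at this
    omega
  -- ∑ f = 48
  have hsumf : ∑ p : P, f p = 48 := by
    have e1 : ∑ p : P, f p = ∑ x ∈ M, ∑ p : P, (if p ∈ N.line x.1 x.2 then 1 else 0) := by
      simp only [hf, Finset.card_filter]
      exact Finset.sum_comm
    rw [e1]
    have e2 : ∀ x ∈ M, (∑ p : P, (if p ∈ N.line x.1 x.2 then 1 else 0)) = 6 := by
      intro x _
      rw [← Finset.card_filter]
      rw [show (Finset.univ.filter fun p => p ∈ N.line x.1 x.2) = N.line x.1 x.2 by
        ext p; simp]
      exact N.line_card x.1 x.2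
    rw [Finset.sum_congr rfl e2, Finset.sum_const, hMcard, smul_eq_mul]
  -- disjointness within a class
  have hdisj : ∀ (i : Fin 4) (j j' : Fin 6), j ≠ j' → (N.line i j ∩ N.line i j').card = 0 := by
    intro i j j' hne
    rw [Finset.card_eq_zero, Finset.eq_empty_iff_forall_notMem]
    intro p hp
    rw [Finset.mem_inter] at hp
    obtain ⟨j0, -, huniq⟩ := N.partition i p
    exact hne ((huniq j hp.1).trans (huniq j' hp.2).symm)
  -- intersection sizes
  have hxycard : ∀ x y : Fin 4 × Fin 6, (N.line x.1 x.2 ∩ N.line y.1 y.2).card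
      = (if x = y then 6 else 0) + (if x.1 = y.1 then 0 else 1) := by
    intro x y
    by_cases hxy1 : x.1 = y.1
    · by_cases hxy2 : x = y
      · subst hxy2; simp [N.line_card]
      · have h2 : x.2 ≠ y.2 := fun h2 => hxy2 (Prod.ext hxy1 h2)
        rw [hxy1]
        simp [hxy2, hxy1, hdisj y.1 x.2 y.2 h2]
    · have : x ≠ y := fun h' => hxy1 (by rw [h'])
      simp [this, hxy1, N.meet x.1 y.1 x.2 y.2 hxy1]
  -- ∑ x∈M, lcount M x.1 = 24
  have hB : ∑ x ∈ M, lcount M x.1 = 24 := by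
    have e1 := Finset.sum_fiberwise_of_maps_to (s := M) (g := fun x : Fin 4 × Fin 6 => x.1)
        (t := Finset.univ) (fun x _ => Finset.mem_univ x.1) (fun x => lcount M x.1)
    rw [← e1]
    have e2 : ∀ i ∈ (Finset.univ : Finset (Fin 4)),
        (∑ x ∈ M.filter fun x => x.1 = i, lcount M x.1) = lcount M i * lcount M i := by
      intro i _
      rw [Finset.sum_congr rfl (fun x hx => by
        rw [(Finset.mem_filter.mp hx).2]), Finset.sum_const, smul_eq_mul]
      rfl
    rw [Finset.sum_congr rfl e2]
    have := hsumL (fun n => n * n)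
    omega
  -- ∑ f² = 88
  have hsumf2 : ∑ p : P, f p * f p = 88 := by
    have e1 : ∀ p : P, f p * f p
        = ∑ x ∈ M, ∑ y ∈ M, (if p ∈ N.line x.1 x.2 ∩ N.line y.1 y.2 then 1 else 0) := by
      intro p
      have hcf : f p = ∑ x ∈ M, (if p ∈ N.line x.1 x.2 then 1 else 0) := Finset.card_filter _ _
      rw [hcf, Finset.sum_mul_sum]
      refine Finset.sum_congr rfl fun x _ => Finset.sum_congr rfl fun y _ => ?_
      by_cases hx : p ∈ N.line x.1 x.2 <;> by_cases hy : p ∈ N.line y.1 y.2 <;>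
        simp [hx, hy, Finset.mem_inter]
    have e2 : ∑ p : P, f p * f p = ∑ x ∈ M, ∑ y ∈ M, (N.line x.1 x.2 ∩ N.line y.1 y.2).card := by
      simp only [e1]
      rw [Finset.sum_comm]
      refine Finset.sum_congr rfl fun x _ => ?_
      rw [Finset.sum_comm]
      refine Finset.sum_congr rfl fun y _ => ?_
      rw [← Finset.card_filter]
      congr 1
      ext p; simp
    rw [e2]
    simp only [hxycard]
    rw [Finset.sum_congr rfl fun x _ => Finset.sum_add_distrib]
    rw [Finset.sum_add_distrib]
    have eA : ∑ x ∈ M, ∑ y ∈ M, (if x = y then 6 else 0) = 48 := by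
      have e3 : ∀ x ∈ M, (∑ y ∈ M, if x = y then 6 else 0) = (6 : ℕ) := by
        intro x hx
        rw [Finset.sum_ite_eq M x (fun _ => 6), if_pos hx]
      rw [Finset.sum_congr rfl e3, Finset.sum_const, hMcard, smul_eq_mul]
    have eB : ∑ x ∈ M, ∑ y ∈ M, (if x.1 = y.1 then 0 else 1) = 40 := by
      have e3 : ∀ x ∈ M, (∑ y ∈ M, (if x.1 = y.1 then 0 else 1))
          + lcount M x.1 = 8 := by
        intro x _
        have h8 : ∑ y ∈ M, ((if x.1 = y.1 then 0 else 1) + (if x.1 = y.1 then 1 else 0)) = 8 := by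
          have e5 : ∀ y ∈ M, ((if x.1 = y.1 then 0 else 1) + (if x.1 = y.1 then 1 else 0)) = (1 : ℕ) := by
            intro y _
            by_cases hc : x.1 = y.1 <;> simp [hc]
          rw [Finset.sum_congr rfl e5, Finset.sum_const, hMcard, smul_eq_mul]
        rw [Finset.sum_add_distrib] at h8
        rw [← h8]
        congr 1
        rw [Finset.sum_boole, Nat.cast_id]
        show (M.filter fun y => y.1 = x.1).card = (M.filter fun y => x.1 = y.1).card
        congr 1
        ext y; simp [eq_comm]
      have e4 : ∑ x ∈ M, ((∑ y ∈ M, (if x.1 = y.1 then 0 else 1)) + lcount M x.1)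
          = 8 * M.card := by
        rw [Finset.sum_congr rfl e3, Finset.sum_const, smul_eq_mul, mul_comm]
      rw [Finset.sum_add_distrib, hB, hMcard] at e4
      omega
    omega
  -- f p ≤ 4
  have hle4 : ∀ p : P, f p < 5 := by
    intro p
    have hcard : f p ≤ Fintype.card (Fin 4) := by
      rw [← Finset.card_univ]
      apply Finset.card_le_card_of_injOn (fun x => x.1) (fun x _ => Finset.mem_univ _)
      intro x hx y hy hxy
      simp only [Finset.mem_coe, Finset.mem_filter] at hx hy
      obtain ⟨j0, -, huniq⟩ := N.partition x.1 p
      have h2 : x.2 = j0 := huniq x.2 hx.2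
      have hxy' : x.1 = y.1 := hxy
      have h3 : y.2 = j0 := huniq y.2 (show p ∈ N.line x.1 y.2 by rw [hxy']; exact hy.2)
      exact Prod.ext hxy (h2.trans h3.symm)
    simp only [Fintype.card_fin] at hcard
    omega
  -- fiberwise sums over values of f
  have hpc : ∀ j : ℕ, N.pcount M j = (Finset.univ.filter fun p : P => f p = j).card := by
    intro j; rfl
  have hfib : ∀ g : ℕ → ℕ, ∑ p : P, g (f p) = ∑ j ∈ Finset.range 5, g j * N.pcount M j := by
    intro g
    rw [← Finset.sum_fiberwise_of_maps_to (g := f) (t := Finset.range 5)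
      (fun p _ => Finset.mem_range.mpr (hle4 p)) (fun p => g (f p))]
    refine Finset.sum_congr rfl fun j _ => ?_
    rw [Finset.sum_congr rfl (fun p hp => by rw [(Finset.mem_filter.mp hp).2]),
      Finset.sum_const, smul_eq_mul, hpc, mul_comm]
  have E1 : ∑ j ∈ Finset.range 5, j * N.pcount M j = 48 := by
    have := hfib id
    simp only [id_eq] at this
    omega
  have E2 : ∑ j ∈ Finset.range 5, j * j * N.pcount M j = 88 := by
    have := hfib (fun n => n * n)
    omega
  simp only [Finset.sum_range_succ, Finset.sum_range_zero] at E1 E2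
  -- cSum = cast of f
  have hcs : ∀ p : P, N.cSum M p = ((f p : ℕ) : ZMod 2) := by
    intro p
    rw [Net64.cSum, Finset.sum_apply]
    simp only [chi, hf, Finset.sum_boole]
  -- wt = p1 + p3
  have hwt : wt (N.cSum M) = N.pcount M 1 + N.pcount M 3 := by
    rw [wt]
    have hset : (Finset.univ.filter fun p : P => N.cSum M p ≠ 0)
        = (Finset.univ.filter fun p : P => f p = 1) ∪ (Finset.univ.filter fun p : P => f p = 3) := by
      ext p
      simp only [Finset.mem_filter, Finset.mem_union, Finset.mem_univ, true_and, hcs p]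
      rw [Ne, ZMod.natCast_eq_zero_iff]
      have := hle4 p
      omega
    rw [hset, Finset.card_union_of_disjoint (Finset.disjoint_left.mpr (by
      intro p hp1 hp3
      simp only [Finset.mem_filter] at hp1 hp3
      omega)), hpc 1, hpc 3]
  have hwteq : wt (N.cSum M) = 4 * N.pcount M 3 + 8 * N.pcount M 4 + 8 := by omega
  refine ⟨?_, hwteq, by omega⟩
  intro hzero
  have : wt (N.cSum M) = 0 := by
    rw [hzero]
    simp [wt]
  omega
end

section
/- In a (6,4) net, if M is a set of lines with parallax (3,3,3,1) (up to permutation of the parallel classes), then the Hamming weight of c(M) is divisible by 4; in particular wt(c(M)) ≠ 6. -/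
lemma ind_odd_eq_sq (m : ℕ) :
    (if ¬ (2 ∣ m) then (1 : ZMod 4) else 0) = (m : ZMod 4) ^ 2 := by
  have h4 : (4 : ZMod 4) = 0 := by decide
  rcases Nat.even_or_odd m with ⟨k, hk⟩ | ⟨k, hk⟩ <;> subst hk
  · rw [if_neg (by simp [two_mul] at *; omega)]
    push_cast
    linear_combination (-(k : ZMod 4) ^ 2) * h4
  · rw [if_pos (by omega)]
    push_cast
    linear_combination (- (k : ZMod 4) ^ 2 - k) * h4


/-- If `M` is a set of lines of a `(6,4)` net with parallax `(3,3,3,1)` up to permutation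
of the parallel classes, then `wt(c(M))` is divisible by 4; in particular it is not 6. -/
theorem net64_parallax_3331 {P : Type} [Fintype P] [DecidableEq P] (N : Net64 P)
    (M : Finset (Fin 4 × Fin 6)) (σ : Equiv.Perm (Fin 4))
    (h : (lcount M (σ 0), lcount M (σ 1), lcount M (σ 2), lcount M (σ 3)) = (3, 3, 3, 1)) :
    4 ∣ wt (N.cSum M) ∧ wt (N.cSum M) ≠ 6 := by
  simp only [Prod.mk.injEq] at h
  obtain ⟨h0, h1, h2, h3⟩ := h
  set m : P → ℕ := fun p => (M.filter fun x => p ∈ N.line x.1 x.2).card with hm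
  -- the cSum at a point is the parity of the number of lines through it
  have hcs : ∀ p, N.cSum M p = ((m p : ZMod 2)) := by
    intro p
    simp only [Net64.cSum, chi, Finset.sum_apply, hm]
    rw [Finset.sum_boole]
  have hwt : wt (N.cSum M) = (Finset.univ.filter fun p : P => ¬ (2 ∣ m p)).card := by
    unfold wt
    congr 1
    apply Finset.filter_congr
    intro p _
    rw [hcs p, Ne, ZMod.natCast_eq_zero_iff]
  have hwt4 : ((wt (N.cSum M) : ZMod 4)) = ∑ p : P, (m p : ZMod 4) ^ 2 := by
    rw [hwt, Finset.natCast_card_filter]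
    exact Finset.sum_congr rfl fun p _ => ind_odd_eq_sq (m p)
  have hm4 : ∀ p, (m p : ZMod 4)
      = ∑ x ∈ M, if p ∈ N.line x.1 x.2 then (1 : ZMod 4) else 0 := by
    intro p
    simp only [hm]
    rw [Finset.natCast_card_filter]
  have hinter : ∀ A B : Finset P,
      (∑ p : P, ((if p ∈ A then (1 : ZMod 4) else 0) * (if p ∈ B then 1 else 0)))
        = ((A ∩ B).card : ZMod 4) := by
    intro A B
    simp_rw [ite_zero_mul_ite_zero, one_mul, ← Finset.mem_inter]
    rw [Finset.sum_boole]
    have : Finset.univ.filter (fun x : P => x ∈ A ∩ B) = A ∩ B := by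
      ext x; simp
    rw [this]
  have hsq : ∑ p : P, (m p : ZMod 4) ^ 2
      = ∑ x ∈ M, ∑ y ∈ M, ((N.line x.1 x.2 ∩ N.line y.1 y.2).card : ZMod 4) := by
    simp_rw [hm4, sq, Finset.sum_mul_sum]
    rw [Finset.sum_comm]
    refine Finset.sum_congr rfl fun x _ => ?_
    rw [Finset.sum_comm]
    exact Finset.sum_congr rfl fun y _ => hinter _ _
  -- parallel distinct lines are disjoint
  have hpar : ∀ (i : Fin 4) (j j' : Fin 6), j ≠ j' →
      (N.line i j ∩ N.line i j').card = 0 := by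
    intro i j j' hne
    rw [Finset.card_eq_zero, Finset.eq_empty_iff_forall_notMem]
    intro p hp
    rw [Finset.mem_inter] at hp
    obtain ⟨j0, _, huniq⟩ := N.partition i p
    exact hne ((huniq j hp.1).trans (huniq j' hp.2).symm)
  have hcard : ∀ x y : Fin 4 × Fin 6,
      ((N.line x.1 x.2 ∩ N.line y.1 y.2).card : ZMod 4)
        = 1 + (if x = y then 2 else 0) + (if x.1 = y.1 then 3 else 0) := by
    intro x y
    by_cases hxy1 : x.1 = y.1
    · by_cases hxy : x = y
      · subst hxy
        rw [Finset.inter_self, N.line_card, if_pos rfl, if_pos rfl]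
        decide
      · have hx2 : x.2 ≠ y.2 := fun hh => hxy (Prod.ext hxy1 hh)
        rw [show N.line y.1 y.2 = N.line x.1 y.2 from by rw [hxy1],
          hpar x.1 x.2 y.2 hx2, if_neg hxy, if_pos hxy1]
        decide
    · rw [N.meet x.1 y.1 x.2 y.2 hxy1, if_neg (fun hh => hxy1 (congrArg Prod.fst hh)),
        if_neg hxy1]
      decide
  -- sums of the class counts
  have hsum1 : ∑ i : Fin 4, lcount M i = 10 := by
    rw [← Equiv.sum_comp σ (fun i => lcount M i), Fin.sum_univ_four, h0, h1, h2, h3]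
  have hsum2 : ∑ i : Fin 4, lcount M i * lcount M i = 28 := by
    rw [← Equiv.sum_comp σ (fun i => lcount M i * lcount M i), Fin.sum_univ_four,
      h0, h1, h2, h3]
  have hMcard : M.card = 10 := by
    rw [Finset.card_eq_sum_card_fiberwise
      (f := Prod.fst) (t := Finset.univ) (fun x _ => Finset.mem_univ _)]
    exact hsum1
  -- per-row sum of the class-indicator
  have hrow : ∀ x : Fin 4 × Fin 6,
      ∑ y ∈ M, (if x.1 = y.1 then (3 : ZMod 4) else 0)
        = 3 * (lcount M x.1 : ZMod 4) := by
    intro x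
    rw [Finset.sum_ite, Finset.sum_const_zero, add_zero, Finset.sum_const,
      nsmul_eq_mul, mul_comm]
    congr 2
    simp [lcount, eq_comm]
  have hfiber : ∑ x ∈ M, (lcount M x.1 : ZMod 4)
      = ∑ i : Fin 4, (lcount M i : ZMod 4) * (lcount M i : ZMod 4) := by
    rw [← Finset.sum_fiberwise' M Prod.fst (fun i => (lcount M i : ZMod 4))]
    refine Finset.sum_congr rfl fun i _ => ?_
    rw [Finset.sum_const, nsmul_eq_mul]
    rfl
  have hdouble : ∑ x ∈ M, ∑ y ∈ M, ((N.line x.1 x.2 ∩ N.line y.1 y.2).card : ZMod 4)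
      = 0 := by
    simp_rw [hcard, Finset.sum_add_distrib]
    have e2 : ∀ x ∈ M, (∑ y ∈ M, if x = y then (2 : ZMod 4) else 0) = 2 := by
      intro x hx
      rw [Finset.sum_ite_eq M x fun _ => (2 : ZMod 4), if_pos hx]
    have e3 : ∑ i : Fin 4, (lcount M i : ZMod 4) * (lcount M i : ZMod 4) = 0 := by
      have h28 : ((∑ i : Fin 4, lcount M i * lcount M i : ℕ) : ZMod 4)
          = ((28 : ℕ) : ZMod 4) := by rw [hsum2]
      push_cast at h28
      rw [h28]
      decide
    rw [Finset.sum_congr rfl e2, Finset.sum_congr rfl fun x _ => hrow x,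
      ← Finset.mul_sum, hfiber, e3, Finset.sum_congr rfl
        (fun x (_ : x ∈ M) => Finset.sum_const (1 : ZMod 4)),
      Finset.sum_congr rfl (fun x (_ : x ∈ M) => rfl)]
    rw [Finset.sum_const, Finset.sum_const, hMcard]
    decide
  have : ((wt (N.cSum M) : ZMod 4)) = 0 := by rw [hwt4, hsq, hdouble]
  have hdvd : 4 ∣ wt (N.cSum M) := (ZMod.natCast_eq_zero_iff _ 4).mp this
  exact ⟨hdvd, fun he => by rw [he] at hdvd; omega⟩
end

section
/- In a (6,4) net, no set Λ of lines with parallax (3,3,3,0) or (3,3,3,2) (up to permutation of the parallel classes) satisfies c(Λ) = 0. -/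
lemma chi_sum {P : Type} [DecidableEq P] (s t : Finset P) :
    ∑ p ∈ s, chi t p = ((s ∩ t).card : ZMod 2) := by
  unfold chi
  rw [Finset.sum_ite_mem, Finset.sum_const, nsmul_eq_mul, mul_one]

lemma Net64.parallel_disjoint {P : Type} [Fintype P] [DecidableEq P] (N : Net64 P)
    (i : Fin 4) {j j' : Fin 6} (hjj : j ≠ j') : N.line i j ∩ N.line i j' = ∅ := by
  ext p
  simp only [Finset.mem_inter, Finset.notMem_empty, iff_false, not_and]
  intro hp hp'
  obtain ⟨j0, _, huniq⟩ := N.partition i p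
  exact hjj ((huniq j hp).trans (huniq j' hp').symm)

/-- In a `(6,4)` net, no set `Λ` of lines with parallax `(3,3,3,0)` or `(3,3,3,2)`
(up to permutation of the parallel classes) satisfies `c(Λ) = 0`. -/
theorem net64_parallax_3330_3332 {P : Type} [Fintype P] [DecidableEq P] (N : Net64 P)
    (Λ : Finset (Fin 4 × Fin 6)) (σ : Equiv.Perm (Fin 4))
    (h : (lcount Λ (σ 0), lcount Λ (σ 1), lcount Λ (σ 2), lcount Λ (σ 3)) = (3, 3, 3, 0) ∨
         (lcount Λ (σ 0), lcount Λ (σ 1), lcount Λ (σ 2), lcount Λ (σ 3)) = (3, 3, 3, 2)) :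
    N.cSum Λ ≠ 0 := by
  intro hc
  have h0 : lcount Λ (σ 0) = 3 ∧ lcount Λ (σ 1) = 3 ∧ lcount Λ (σ 2) = 3 ∧
      (lcount Λ (σ 3) = 0 ∨ lcount Λ (σ 3) = 2) := by
    rcases h with h | h <;> simp only [Prod.mk.injEq] at h <;>
      exact ⟨h.1, h.2.1, h.2.2.1, by omega⟩
  obtain ⟨h1, h2, h3, hl3⟩ := h0
  -- `|Λ| = 9 + lcount Λ (σ 3)`
  have hcard : Λ.card = 9 + lcount Λ (σ 3) := by
    have e1 : Λ.card = ∑ i : Fin 4, lcount Λ i :=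
      Finset.card_eq_sum_card_fiberwise (fun x _ => Finset.mem_univ x.1)
    have e2 : ∑ i : Fin 4, lcount Λ (σ i) = ∑ i : Fin 4, lcount Λ i :=
      Equiv.sum_comp σ (lcount Λ)
    rw [Fin.sum_univ_four] at e2
    omega
  -- pick a line of class `σ 3` not in `Λ`
  obtain ⟨j, hj⟩ : ∃ j : Fin 6, (σ 3, j) ∉ Λ := by
    by_contra hco
    push_neg at hco
    have hsub : (Finset.univ : Finset (Fin 6)).image (fun j => ((σ 3, j) : Fin 4 × Fin 6))
        ⊆ Λ.filter fun x => x.1 = σ 3 := by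
      intro x hx
      simp only [Finset.mem_image, Finset.mem_univ, true_and] at hx
      obtain ⟨j, rfl⟩ := hx
      simp [Finset.mem_filter, hco j]
    have hle := Finset.card_le_card hsub
    rw [Finset.card_image_of_injective _
      (fun a b hab => by simpa using congrArg Prod.snd hab)] at hle
    simp only [Finset.card_univ, Fintype.card_fin] at hle
    have : lcount Λ (σ 3) = (Λ.filter fun x => x.1 = σ 3).card := rfl
    omega
  -- sum `c(Λ)` over the points of that line
  have key : ∑ p ∈ N.line (σ 3) j, N.cSum Λ p = 0 := by simp [hc]
  have expand : ∑ p ∈ N.line (σ 3) j, N.cSum Λ p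
      = ∑ x ∈ Λ, ((N.line (σ 3) j ∩ N.line x.1 x.2).card : ZMod 2) := by
    simp only [Net64.cSum, Finset.sum_apply]
    rw [Finset.sum_comm]
    exact Finset.sum_congr rfl fun x _ => chi_sum _ _
  have eval : ∀ x ∈ Λ, ((N.line (σ 3) j ∩ N.line x.1 x.2).card : ZMod 2)
      = if x.1 = σ 3 then 0 else 1 := by
    rintro ⟨a, b⟩ hx
    by_cases ha : a = σ 3
    · subst ha
      have hne : j ≠ b := by rintro rfl; exact hj hx
      rw [if_pos rfl, N.parallel_disjoint _ hne]
      simp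
    · rw [if_neg ha, N.meet _ _ _ _ (fun hh => ha hh.symm)]
      simp
  rw [expand, Finset.sum_congr rfl eval, Finset.sum_ite, Finset.sum_const, Finset.sum_const,
    smul_zero, zero_add, nsmul_eq_mul, mul_one] at key
  have hfc := Finset.card_filter_add_card_filter_not (s := Λ) (p := fun x => x.1 = σ 3)
  have h9 : (Λ.filter fun x => ¬ x.1 = σ 3).card = 9 := by
    have : lcount Λ (σ 3) = (Λ.filter fun x => x.1 = σ 3).card := rfl
    omega
  rw [h9] at key
  exact absurd key (by decide)
end

section
/- In a (6,4) net, if Λ is a set of lines with parallax (2,2,2,2) and c(Λ) = 0, then Λ has no 1-points, no 3-points, and no 4-points, and exactly 24 points of the net are 2-points of Λ (each of the 24 points covered by Λ lies on exactly two lines of Λ). -/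
section Aux
variable {P : Type} [Fintype P] [DecidableEq P]

lemma Net64.inter_card (N : Net64 P) (x y : Fin 4 × Fin 6) :
    (N.line x.1 x.2 ∩ N.line y.1 y.2).card =
      if x = y then 6 else if x.1 = y.1 then 0 else 1 := by
  by_cases hxy : x = y
  · simp [hxy, Finset.inter_self, N.line_card]
  · rw [if_neg hxy]
    by_cases h1 : x.1 = y.1
    · rw [if_pos h1]
      rw [Finset.card_eq_zero, Finset.eq_empty_iff_forall_notMem]
      intro p hp
      rw [Finset.mem_inter] at hp
      obtain ⟨j0, -, huniq⟩ := N.partition x.1 p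
      have h2 : x.2 = y.2 := by
        rw [huniq x.2 hp.1, huniq y.2 (by rw [h1]; exact hp.2)]
      exact hxy (Prod.ext h1 h2)
    · rw [if_neg h1]
      exact N.meet x.1 y.1 x.2 y.2 h1
end Aux


/-- If `Λ` is a set of lines of a `(6,4)` net with parallax `(2,2,2,2)` and `c(Λ) = 0`,
then `Λ` has no 1-points, no 3-points and no 4-points, and exactly 24 points of the net
are 2-points of `Λ`. -/
theorem net64_parallax_2222_points {P : Type} [Fintype P] [DecidableEq P] (N : Net64 P)
    (Λ : Finset (Fin 4 × Fin 6)) (hl : ∀ i : Fin 4, lcount Λ i = 2)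
    (hc : N.cSum Λ = 0) :
    N.pcount Λ 1 = 0 ∧ N.pcount Λ 3 = 0 ∧ N.pcount Λ 4 = 0 ∧ N.pcount Λ 2 = 24 := by
  classical
  set deg : P → ℕ := fun p => (Λ.filter fun x => p ∈ N.line x.1 x.2).card with hdegdef
  -- cardinality of Λ
  have hΛ : Λ.card = 8 := by
    rw [Finset.card_eq_sum_card_fiberwise (f := Prod.fst) (t := Finset.univ)
      (fun x _ => Finset.mem_univ _)]
    have : ∀ i : Fin 4, (Λ.filter fun x => x.1 = i).card = 2 := hl
    simp [this]
  -- parity of degrees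
  have hpar : ∀ p : P, (2 : ℕ) ∣ deg p := by
    intro p
    have h0 : N.cSum Λ p = 0 := by rw [hc]; rfl
    rw [Net64.cSum, Finset.sum_apply] at h0
    simp only [chi] at h0
    rw [Finset.sum_boole] at h0
    exact (ZMod.natCast_eq_zero_iff _ 2).mp h0
  -- degrees are at most 4
  have hle : ∀ p : P, deg p ≤ 4 := by
    intro p
    have : deg p ≤ (Finset.univ : Finset (Fin 4)).card := by
      apply Finset.card_le_card_of_injOn Prod.fst (fun x _ => Finset.mem_univ _)
      intro x hx y hy hxy
      rw [Finset.mem_coe, Finset.mem_filter] at hx hy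
      obtain ⟨j0, -, huniq⟩ := N.partition x.1 p
      have h2 : x.2 = y.2 := by
        rw [huniq x.2 hx.2, huniq y.2 (by rw [hxy]; exact hy.2)]
      exact Prod.ext hxy h2
    simpa using this
  have hcases : ∀ p : P, deg p = 0 ∨ deg p = 2 ∨ deg p = 4 := by
    intro p
    have := hpar p
    have := hle p
    omega
  -- total incidence count
  have hsum : ∑ p : P, deg p = 48 := by
    have : ∀ p : P, deg p = ∑ x ∈ Λ, if p ∈ N.line x.1 x.2 then 1 else 0 := by
      intro p; rw [hdegdef]; simp [Finset.sum_boole]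
    rw [Finset.sum_congr rfl fun p _ => this p, Finset.sum_comm]
    have hinner : ∀ x ∈ Λ, (∑ p : P, if p ∈ N.line x.1 x.2 then 1 else 0) = 6 := by
      intro x _
      rw [Finset.sum_boole]
      simp [Finset.filter_univ_mem, N.line_card]
    rw [Finset.sum_congr rfl hinner, Finset.sum_const, hΛ]; rfl
  -- sum of squared degrees
  have hsumsq : ∑ p : P, (deg p) ^ 2 = 96 := by
    have step1 : ∀ p : P, (deg p) ^ 2 =
        ∑ x ∈ Λ, ∑ y ∈ Λ, (if p ∈ N.line x.1 x.2 ∩ N.line y.1 y.2 then 1 else 0) := by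
      intro p
      have hd : deg p = ∑ x ∈ Λ, if p ∈ N.line x.1 x.2 then 1 else 0 := by
        rw [hdegdef]; simp [Finset.sum_boole]
      rw [pow_two, hd, Finset.sum_mul_sum]
      refine Finset.sum_congr rfl fun x _ => Finset.sum_congr rfl fun y _ => ?_
      simp only [Finset.mem_inter]
      split_ifs <;> simp_all
    rw [Finset.sum_congr rfl fun p _ => step1 p, Finset.sum_comm]
    have step2 : ∀ x ∈ Λ, (∑ p : P, ∑ y ∈ Λ,
        (if p ∈ N.line x.1 x.2 ∩ N.line y.1 y.2 then 1 else 0)) =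
        ∑ y ∈ Λ, (if x = y then 6 else if x.1 = y.1 then 0 else 1) := by
      intro x _
      rw [Finset.sum_comm]
      refine Finset.sum_congr rfl fun y _ => ?_
      rw [Finset.sum_boole]
      simp only [Finset.filter_univ_mem]
      rw [← N.inter_card x y, Nat.cast_id]
    rw [Finset.sum_congr rfl step2]
    have split : ∀ x y : Fin 4 × Fin 6,
        (if x = y then (6:ℕ) else if x.1 = y.1 then 0 else 1) =
        (if x = y then 6 else 0) + (if x.1 = y.1 then 0 else 1) := by
      intro x y
      by_cases h : x = y
      · simp [h]
      · by_cases h1 : x.1 = y.1 <;> simp [h, h1]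
    simp only [split, Finset.sum_add_distrib]
    have hA : ∀ x ∈ Λ, (∑ y ∈ Λ, if x = y then (6:ℕ) else 0) = 6 := by
      intro x hx
      rw [Finset.sum_ite_eq]
      simp [hx]
    have hB : ∀ x ∈ Λ, (∑ y ∈ Λ, if x.1 = y.1 then (0:ℕ) else 1) = 6 := by
      intro x _
      rw [Finset.sum_ite]
      simp only [Finset.sum_const_zero, Finset.sum_const, smul_eq_mul, mul_one, zero_add]
      have hsplit := Finset.card_filter_add_card_filter_not
        (s := Λ) (p := fun y => x.1 = y.1)
      have h2 : (Λ.filter fun y => x.1 = y.1).card = 2 := by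
        have := hl x.1
        rw [lcount] at this
        rw [← this]
        congr 1
        apply Finset.filter_congr
        intro y _
        simp [eq_comm]
      omega
    rw [Finset.sum_congr rfl hA, Finset.sum_congr rfl hB, Finset.sum_const, hΛ]; rfl
  -- the partition into degree classes
  set A := Finset.univ.filter fun p : P => deg p = 2 with hAdef
  set B := Finset.univ.filter fun p : P => deg p = 4 with hBdef
  have splitsum : ∀ g : P → ℕ, (∀ p, deg p = 0 → g p = 0) →
      ∑ p : P, g p = ∑ p ∈ A, g p + ∑ p ∈ B, g p := by
    intro g hg
    rw [← Finset.sum_filter_add_sum_filter_not Finset.univ (fun p => deg p = 2) g]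
    congr 1
    rw [← Finset.sum_filter_add_sum_filter_not
      (Finset.univ.filter fun p : P => ¬ deg p = 2) (fun p => deg p = 4) g]
    have e1 : ((Finset.univ.filter fun p : P => ¬ deg p = 2).filter
        fun p => deg p = 4) = B := by
      rw [Finset.filter_filter, hBdef]
      apply Finset.filter_congr
      intro p _
      constructor
      · exact fun h => h.2
      · intro h; exact ⟨by omega, h⟩
    have e2 : (∑ p ∈ (Finset.univ.filter fun p : P => ¬ deg p = 2).filter
        (fun p => ¬ deg p = 4), g p) = 0 := by
      apply Finset.sum_eq_zero
      intro p hp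
      simp only [Finset.mem_filter] at hp
      apply hg
      have := hcases p
      omega
    rw [e1, e2, add_zero]
  have hsum2 : 2 * A.card + 4 * B.card = 48 := by
    rw [← hsum, splitsum deg (fun p h => h)]
    have : ∑ p ∈ A, deg p = 2 * A.card := by
      rw [Finset.sum_congr rfl (fun p hp => (Finset.mem_filter.mp hp).2),
        Finset.sum_const, smul_eq_mul, mul_comm]
    rw [this]
    have : ∑ p ∈ B, deg p = 4 * B.card := by
      rw [Finset.sum_congr rfl (fun p hp => (Finset.mem_filter.mp hp).2),
        Finset.sum_const, smul_eq_mul, mul_comm]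
    rw [this]
  have hsumsq2 : 4 * A.card + 16 * B.card = 96 := by
    rw [← hsumsq, splitsum (fun p => (deg p)^2) (fun p h => by simp [h])]
    have e1 : ∑ p ∈ A, (deg p)^2 = 4 * A.card := by
      rw [Finset.sum_congr rfl (fun p hp => by
        rw [(Finset.mem_filter.mp hp).2]),
        Finset.sum_const, smul_eq_mul, mul_comm]
      norm_num
    have e2 : ∑ p ∈ B, (deg p)^2 = 16 * B.card := by
      rw [Finset.sum_congr rfl (fun p hp => by
        rw [(Finset.mem_filter.mp hp).2]),
        Finset.sum_const, smul_eq_mul, mul_comm]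
      norm_num
    rw [e1, e2]
  -- conclusions
  have hempty : ∀ j, j = 1 ∨ j = 3 → N.pcount Λ j = 0 := by
    intro j hj
    rw [Net64.pcount, Finset.card_eq_zero, Finset.filter_eq_empty_iff]
    intro p _
    have := hcases p
    rw [hdegdef] at this
    simp only at this
    omega
  refine ⟨hempty 1 (Or.inl rfl), hempty 3 (Or.inr rfl), ?_, ?_⟩
  · show N.pcount Λ 4 = 0
    have : N.pcount Λ 4 = B.card := rfl
    omega
  · have : N.pcount Λ 2 = A.card := rfl
    omega
end
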